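/- For every ε > 0 and every x ∈ ℝ², there is a relatively dense set Y ⊆ ℝ² and infinitely many directions v ∈ S¹ such that dist(L_{x,v}, Y \ {x}) ≥ ε for each such v. -/

import Mathlib

open Metric Set MeasureTheory Filter Real

open Metric Set MeasureTheory Filter Real

namespace Stmt19Aux
open RealInnerProductSpace

noncomputable def vec (s t : ℝ) : EuclideanSpace ℝ (Fin 2) :=
  (WithLp.equiv 2 (Fin 2 → ℝ)).symm ![s, t]

lemma norm_vec (s t : ℝ) : ‖vec s t‖ = Real.sqrt (s^2 + t^2) := by
  rw [EuclideanSpace.norm_eq, Fin.sum_univ_two]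
  norm_num [vec, Real.norm_eq_abs, sq_abs]

lemma coord_le_norm (z : EuclideanSpace ℝ (Fin 2)) (i : Fin 2) : |z i| ≤ ‖z‖ := by
  rw [EuclideanSpace.norm_eq]
  rw [show |z i| = Real.sqrt (‖z i‖^2) by rw [Real.sqrt_sq_eq_abs]; simp]
  exact Real.sqrt_le_sqrt (Finset.single_le_sum (f := fun j => ‖z j‖^2)
    (fun j _ => sq_nonneg _) (Finset.mem_univ i))

lemma inner2 (u z : EuclideanSpace ℝ (Fin 2)) : ⟪u, z⟫ = u 0 * z 0 + u 1 * z 1 := by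
  simp [PiLp.inner_apply, Fin.sum_univ_two, RCLike.inner_apply]
  ring

lemma oneD {δ : ℝ} (hδ : 0 < δ) (a : ℝ) (ha : 0 < a) (y₀ : ℝ) :
    ∃ y : ℝ, |y - y₀| ≤ 7*δ ∧ ∀ n : ℕ, δ ≤ |y - a * (1/2)^(n+1)| := by
  have hP : ∀ n : ℕ, 0 < a * (1/2 : ℝ)^(n+1) := fun n => by positivity
  by_cases h1 : y₀ ≤ -δ
  · refine ⟨y₀, by simp; positivity, fun n => ?_⟩
    have := hP n
    apply le_abs.mpr; right; linarith
  by_cases h2 : y₀ ≤ 6*δ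
  · push_neg at h1
    refine ⟨-δ, abs_le.mpr ⟨by linarith, by linarith⟩, fun n => ?_⟩
    have := hP n
    apply le_abs.mpr; right; linarith
  push_neg at h1 h2
  by_cases hex : ∃ k : ℕ, |a*(1/2 : ℝ)^(k+1) - y₀| ≤ 2*δ
  · obtain ⟨k, hk⟩ := hex
    obtain ⟨hk1, hk2⟩ := abs_le.mp hk
    set s := a * (1/2 : ℝ)^(k+1) with hs
    have hs4 : 4*δ < s := by linarith
    set y := if s ≤ y₀ then s + δ else s - δ with hy
    have hy1 : s - δ ≤ y := by rw [hy]; split_ifs <;> linarith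
    have hy2 : y ≤ s + δ := by rw [hy]; split_ifs <;> linarith
    refine ⟨y, ?_, fun n => ?_⟩
    · rw [hy]; split_ifs with h <;> [skip; push_neg at h] <;>
        exact abs_le.mpr ⟨by linarith, by linarith⟩
    rcases lt_trichotomy n k with h | h | h
    · -- n < k : P n ≥ 2 s
      have hle : (1/2 : ℝ)^(k+1) ≤ (1/2 : ℝ)^(n+1) * (1/2) := by
        rw [← pow_succ]
        exact pow_le_pow_of_le_one (by norm_num) (by norm_num) (by omega)
      have h2s : 2 * s ≤ a * (1/2 : ℝ)^(n+1) := by nlinarith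
      apply le_abs.mpr; right; linarith
    · subst h
      rw [hy]; split_ifs <;> [apply le_abs.mpr; apply le_abs.mpr] <;>
        [left; right] <;> linarith
    · -- k < n : P n ≤ s / 2
      have hle : (1/2 : ℝ)^(n+1) ≤ (1/2 : ℝ)^(k+1) * (1/2) := by
        rw [← pow_succ]
        exact pow_le_pow_of_le_one (by norm_num) (by norm_num) (by omega)
      have h2s : a * (1/2 : ℝ)^(n+1) ≤ s / 2 := by nlinarith
      apply le_abs.mpr; left; linarith
  · push_neg at hex
    refine ⟨y₀, by simp; positivity, fun n => ?_⟩
    have := hex n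
    rw [abs_sub_comm]
    linarith

noncomputable def w (n : ℕ) : EuclideanSpace ℝ (Fin 2) := vec 1 ((1/2)^(n+1))

lemma key (ε : ℝ) (hε : 0 < ε) (x p : EuclideanSpace ℝ (Fin 2)) :
    ∃ q : EuclideanSpace ℝ (Fin 2), dist p q < 20*ε ∧
      ∀ (n : ℕ) (t : ℝ), 0 ≤ t → ε ≤ dist q (x + t • w n) := by
  by_cases ha : p 0 - x 0 ≤ 0
  · refine ⟨vec (min (p 0) (x 0 - ε)) (p 1), ?_, ?_⟩
    · have hsub : p - vec (min (p 0) (x 0 - ε)) (p 1)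
          = vec (p 0 - min (p 0) (x 0 - ε)) 0 := by
        ext i; fin_cases i <;> simp [vec]
      rw [dist_eq_norm, hsub, norm_vec]
      have h0 : 0 ≤ p 0 - min (p 0) (x 0 - ε) := by
        rcases min_le_iff.mpr (Or.inl (le_refl (p 0))) with h; linarith [min_le_left (p 0) (x 0 - ε)]
      have h1 : p 0 - min (p 0) (x 0 - ε) ≤ ε := by
        rcases le_total (p 0) (x 0 - ε) with h | h
        · simp [min_eq_left h]; positivity
        · rw [min_eq_right h]; linarith
      rw [show (0:ℝ)^2 = 0 by ring, add_zero, Real.sqrt_sq h0]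
      linarith
    · intro n t ht
      rw [dist_eq_norm]
      have hc : (vec (min (p 0) (x 0 - ε)) (p 1) - (x + t • w n)) 0
          = min (p 0) (x 0 - ε) - (x 0 + t * 1) := rfl
      have hb := coord_le_norm (vec (min (p 0) (x 0 - ε)) (p 1) - (x + t • w n)) 0
      rw [hc] at hb
      have hmin : min (p 0) (x 0 - ε) ≤ x 0 - ε := min_le_right _ _
      have : ε ≤ |min (p 0) (x 0 - ε) - (x 0 + t * 1)| := by
        apply le_abs.mpr; right; linarith
      linarith
  · push_neg at ha
    obtain ⟨y, hy7, hyn⟩ := oneD (δ := 2*ε) (by linarith) (p 0 - x 0) (by linarith) (p 1 - x 1)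
    refine ⟨vec (p 0) (x 1 + y), ?_, ?_⟩
    · have hsub : p - vec (p 0) (x 1 + y) = vec 0 (p 1 - (x 1 + y)) := by
        ext i; fin_cases i <;> simp [vec]
      rw [dist_eq_norm, hsub, norm_vec]
      rw [show (0:ℝ)^2 = 0 by ring, zero_add, Real.sqrt_sq_eq_abs]
      have : |p 1 - (x 1 + y)| ≤ 14 * ε := by
        rw [show p 1 - (x 1 + y) = -(y - (p 1 - x 1)) by ring, abs_neg]
        linarith
      linarith
    · intro n t ht
      rw [dist_eq_norm]
      set z := vec (p 0) (x 1 + y) - (x + t • w n) with hz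
      set m : ℝ := (1/2 : ℝ)^(n+1) with hm
      have hz0 : z 0 = p 0 - (x 0 + t * 1) := rfl
      have hz1 : z 1 = (x 1 + y) - (x 1 + t * m) := rfl
      set u := vec (-m) 1 with hu
      have hinner : ⟪u, z⟫ = y - (p 0 - x 0) * m := by
        rw [inner2, hz0, hz1]
        show (-m) * _ + 1 * _ = _
        ring
      have hiabs : 2*ε ≤ |⟪u, z⟫| := by
        rw [hinner]
        have := hyn n
        rwa [← hm] at this
      have hub : ‖u‖ ≤ 2 := by
        rw [hu, norm_vec]
        have hm1 : m ≤ 1 := by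
          rw [hm]; exact pow_le_one₀ (by norm_num) (by norm_num)
        have hm0 : 0 ≤ m := by positivity
        rw [show (2:ℝ) = Real.sqrt 4 by
          rw [show (4:ℝ) = 2^2 by norm_num, Real.sqrt_sq (by norm_num)]]
        apply Real.sqrt_le_sqrt
        nlinarith
      have hCS : |⟪u, z⟫| ≤ ‖u‖ * ‖z‖ := abs_real_inner_le_norm u z
      nlinarith [norm_nonneg z, norm_nonneg u]

end Stmt19Aux

noncomputable def setDist {E : Type*} [PseudoMetricSpace E] (A B : Set E) : ℝ :=
  sInf (Set.image2 dist A B)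

def ray {E : Type*} [NormedAddCommGroup E] [NormedSpace ℝ E] (x v : E) : Set E :=
  {p : E | ∃ t : ℝ, 0 ≤ t ∧ p = x + t • v}

theorem stmt19 (ε : ℝ) (hε : 0 < ε) (x : EuclideanSpace ℝ (Fin 2)) :
    ∃ Y : Set (EuclideanSpace ℝ (Fin 2)),
      (∃ R > (0 : ℝ), ∀ p : EuclideanSpace ℝ (Fin 2), ∃ y ∈ Y, dist p y < R) ∧
      {v : EuclideanSpace ℝ (Fin 2) |
        v ∈ sphere (0 : EuclideanSpace ℝ (Fin 2)) 1 ∧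
          ε ≤ setDist (ray x v) (Y \ {x})}.Infinite := by
  classical
  set W : ℕ → EuclideanSpace ℝ (Fin 2) := Stmt19Aux.w with hW
  set Y : Set (EuclideanSpace ℝ (Fin 2)) :=
    {q | ∀ (n : ℕ) (t : ℝ), 0 ≤ t → ε ≤ dist q (x + t • W n)} with hY
  -- a point of Y
  obtain ⟨q₀, _, hq₀⟩ := Stmt19Aux.key ε hε x x
  have hq₀Y : q₀ ∈ Y := hq₀
  have hxY : x ∉ Y := by
    intro h
    have := h 0 0 le_rfl
    simp at this
    linarith
  have hq₀x : q₀ ≠ x := fun h => hxY (h ▸ hq₀Y)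
  have hq₀mem : q₀ ∈ Y \ {x} := ⟨hq₀Y, by simp [hq₀x]⟩
  -- w facts
  have hWne : ∀ n, W n ≠ 0 := by
    intro n h
    have h0 : W n 0 = (0 : EuclideanSpace ℝ (Fin 2)) 0 := by rw [h]
    have : (1 : ℝ) = 0 := h0
    norm_num at this
  have hWnorm : ∀ n, 0 < ‖W n‖ := fun n => norm_pos_iff.mpr (hWne n)
  set v : ℕ → EuclideanSpace ℝ (Fin 2) := fun n => ‖W n‖⁻¹ • W n with hv
  have hvnorm : ∀ n, ‖v n‖ = 1 := by
    intro n
    rw [hv]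
    simp only [norm_smul, norm_inv, norm_norm]
    exact inv_mul_cancel₀ (ne_of_gt (hWnorm n))
  refine ⟨Y, ⟨20*ε, by linarith, ?_⟩, ?_⟩
  · intro p
    obtain ⟨q, h1, h2⟩ := Stmt19Aux.key ε hε x p
    exact ⟨q, h2, h1⟩
  · apply Set.infinite_of_injective_forall_mem (f := v)
    · intro n k h
      have e0 : ‖W n‖⁻¹ * W n 0 = ‖W k‖⁻¹ * W k 0 := by
        have : v n 0 = v k 0 := by rw [h]
        simpa [hv] using this
      have hw0 : ∀ j, W j 0 = 1 := fun j => rfl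
      rw [hw0, hw0, mul_one, mul_one] at e0
      have e1 : ‖W n‖⁻¹ * W n 1 = ‖W k‖⁻¹ * W k 1 := by
        have : v n 1 = v k 1 := by rw [h]
        simpa [hv] using this
      rw [e0] at e1
      have hm : W n 1 = W k 1 :=
        mul_left_cancel₀ (inv_ne_zero (ne_of_gt (hWnorm k))) e1
      have hw1 : ∀ j, W j 1 = (1/2 : ℝ)^(j+1) := fun j => rfl
      rw [hw1, hw1] at hm
      by_contra hne
      rcases Nat.lt_or_ge n k with hlt | hge
      · have := pow_lt_pow_right_of_lt_one₀ (a := (1/2 : ℝ)) (by norm_num) (by norm_num)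
          (show n + 1 < k + 1 by omega)
        rw [hm] at this
        exact lt_irrefl _ this
      · have hlt : k < n := by omega
        have := pow_lt_pow_right_of_lt_one₀ (a := (1/2 : ℝ)) (by norm_num) (by norm_num)
          (show k + 1 < n + 1 by omega)
        rw [hm] at this
        exact lt_irrefl _ this
    · intro n
      refine ⟨mem_sphere_zero_iff_norm.mpr (hvnorm n), ?_⟩
      apply le_csInf
      · refine ⟨dist x q₀, Set.mem_image2_of_mem ?_ hq₀mem⟩
        exact ⟨0, le_rfl, by simp⟩
      · rintro b ⟨r, ⟨t, ht, rfl⟩, q, ⟨hqY, hqx⟩, rfl⟩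
        have : t • v n = (t * ‖W n‖⁻¹) • W n := by
          rw [hv]; rw [smul_smul]
        rw [this, dist_comm]
        exact hqY n (t * ‖W n‖⁻¹) (mul_nonneg ht (inv_nonneg.mpr (norm_nonneg _)))
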